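/- arXiv:2509.07332 — 3 statements merged into one kernel-verified Lean document; each statement's English description precedes it below -/
import Mathlib

section
/- In the Heisenberg–Virasoro conformal algebra 𝒲(0), the map f₁₁: L ↦ H, H ↦ 0, extended to an 𝔽[∂]-module homomorphism 𝒲(0) → 𝒲(0), is a derivation that is not inner; similarly H ↦ H, L ↦ 0 and L ↦ ∂H, H ↦ 0 are non-inner derivations. Hence dim Der(𝒲(0))/Inder(𝒲(0)) ≥ 3. -/
open Function Finset

/-- A Lie conformal algebra over `F`, presented via its `j`-products
`prod j a b = a_(j) b`, the coefficients of `λ^j/j!` in the `λ`-bracket `[a_λ b]`.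
`D` is the action of `∂`. -/
structure LCA (F : Type) [Field F] [CharZero F]
    (A : Type) [AddCommGroup A] [Module F A] where
  D : A →ₗ[F] A
  prod : ℕ → A →ₗ[F] A →ₗ[F] A
  locality : ∀ a b : A, ∃ N, ∀ n, N ≤ n → prod n a b = 0
  sesq₀ : ∀ a b : A, prod 0 (D a) b = 0
  sesq₁ : ∀ (n : ℕ) (a b : A),
    prod (n+1) (D a) b = (-((n+1 : ℕ) : F)) • prod n a b
  sesq₂₀ : ∀ a b : A, prod 0 a (D b) = D (prod 0 a b)
  sesq₂ : ∀ (n : ℕ) (a b : A),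
    prod (n+1) a (D b) = D (prod (n+1) a b) + ((n+1 : ℕ) : F) • prod n a b
  skew : ∀ (n : ℕ) (a b : A) (N : ℕ), (∀ k, N ≤ k → prod k b a = 0) →
    prod n a b = ∑ j ∈ Finset.range N,
      (((-1 : F) ^ (n + j + 1)) * ((j.factorial : F)⁻¹)) • ((D ^ j) (prod (n+j) b a))
  jacobi : ∀ (m n : ℕ) (a b c : A),
    prod m a (prod n b c) - prod n b (prod m a c)
      = ∑ j ∈ Finset.range (m+1), ((m.choose j : ℕ) : F) • prod (m+n-j) (prod j a b) c

/-- A module over a Lie conformal algebra, via the `j`-actions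
`act j a m = a_(j) m`, the coefficients of `λ^j/j!` in `a_λ m`. -/
structure LCAMod (F : Type) [Field F] [CharZero F]
    (A : Type) [AddCommGroup A] [Module F A]
    (M : Type) [AddCommGroup M] [Module F M] (S : LCA F A) where
  DM : M →ₗ[F] M
  act : ℕ → A →ₗ[F] M →ₗ[F] M
  locality : ∀ (a : A) (m : M), ∃ N, ∀ n, N ≤ n → act n a m = 0
  sesq₀ : ∀ (a : A) (m : M), act 0 (S.D a) m = 0
  sesq₁ : ∀ (n : ℕ) (a : A) (m : M),
    act (n+1) (S.D a) m = (-((n+1 : ℕ) : F)) • act n a m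
  sesq₂₀ : ∀ (a : A) (m : M), act 0 a (DM m) = DM (act 0 a m)
  sesq₂ : ∀ (n : ℕ) (a : A) (m : M),
    act (n+1) a (DM m) = DM (act (n+1) a m) + ((n+1 : ℕ) : F) • act n a m
  jacobi : ∀ (i j : ℕ) (a b : A) (m : M),
    act i a (act j b m) - act j b (act i a m)
      = ∑ k ∈ Finset.range (i+1), ((i.choose k : ℕ) : F) • act (i+j-k) (S.prod k a b) m

section W0

variable {F : Type} [Field F] [CharZero F]
variable {A : Type} [AddCommGroup A] [Module F A]

/-- A derivation of a Lie conformal algebra: an `F[∂]`-module endomorphism `E`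
with `E([a_λ b]) = [a_λ E(b)] + [E(a)_λ b]`. -/
def IsConfDerivation (S : LCA F A) (E : A →ₗ[F] A) : Prop :=
  (∀ x : A, E (S.D x) = S.D (E x)) ∧
  (∀ (n : ℕ) (a b : A), E (S.prod n a b) = S.prod n a (E b) + S.prod n (E a) b)

/-- An inner derivation: `ad a = [a_λ ·]|_{λ=0} = a_(0)·` for some `a`. -/
def IsInnerDerivation (S : LCA F A) (E : A →ₗ[F] A) : Prop :=
  ∃ x : A, ∀ a : A, E a = S.prod 0 x a

end W0

section Waux

variable {F : Type} [Field F] [CharZero F]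
variable {A : Type} [AddCommGroup A] [Module F A]

/-- The derivation identity for a pair `(a, b)` at all `n`. -/
def Qd (S : LCA F A) (E : A →ₗ[F] A) (a b : A) : Prop :=
  ∀ n : ℕ, E (S.prod n a b) = S.prod n a (E b) + S.prod n (E a) b

theorem Qd_D_left {S : LCA F A} {E : A →ₗ[F] A}
    (hED : ∀ x, E (S.D x) = S.D (E x)) {a b : A} (h : Qd S E a b) :
    Qd S E (S.D a) b := by
  intro n
  cases n with
  | zero => rw [S.sesq₀, map_zero, hED, S.sesq₀, S.sesq₀, add_zero]
  | succ n => rw [S.sesq₁, map_smul, h n, hED, S.sesq₁, S.sesq₁, smul_add]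

theorem Qd_D_right {S : LCA F A} {E : A →ₗ[F] A}
    (hED : ∀ x, E (S.D x) = S.D (E x)) {a b : A} (h : Qd S E a b) :
    Qd S E a (S.D b) := by
  intro n
  cases n with
  | zero => rw [S.sesq₂₀, hED, h 0, hED, map_add, S.sesq₂₀, S.sesq₂₀]
  | succ n =>
      rw [S.sesq₂, map_add, map_smul, hED, h (n+1), h n, hED, S.sesq₂, S.sesq₂,
        map_add]
      module

theorem Qd_pow {S : LCA F A} {E : A →ₗ[F] A}
    (hED : ∀ x, E (S.D x) = S.D (E x)) {a b : A} (h : Qd S E a b)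
    (j k : ℕ) : Qd S E ((S.D ^ j) a) ((S.D ^ k) b) := by
  have hk : ∀ k : ℕ, Qd S E a ((S.D ^ k) b) := by
    intro k
    induction k with
    | zero => simpa using h
    | succ k ih =>
        have e : (S.D ^ (k+1)) b = S.D ((S.D ^ k) b) := by
          rw [pow_succ']; rfl
        rw [e]
        exact Qd_D_right hED ih
  induction j with
  | zero => simpa using hk k
  | succ j ih =>
      have e : (S.D ^ (j+1)) a = S.D ((S.D ^ j) a) := by
        rw [pow_succ']; rfl
      rw [e]
      exact Qd_D_left hED ih

theorem isDeriv_of_LH (S : LCA F A) (L H : A) (bas : Module.Basis (Fin 2 × ℕ) F A)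
    (hbas : ∀ k : ℕ, bas (0, k) = (S.D ^ k) L ∧ bas (1, k) = (S.D ^ k) H)
    (E : A →ₗ[F] A) (hED : ∀ x, E (S.D x) = S.D (E x))
    (hLL : Qd S E L L) (hLH : Qd S E L H) (hHL : Qd S E H L)
    (hHH : Qd S E H H) : IsConfDerivation S E := by
  refine ⟨hED, ?_⟩
  intro n a b
  have key : ∀ p q : Fin 2 × ℕ, Qd S E (bas p) (bas q) := by
    have h2 : ∀ z : Fin 2, z = 0 ∨ z = 1 := by decide
    rintro ⟨x, j⟩ ⟨y, k⟩
    rcases h2 x with rfl | rfl <;> rcases h2 y with rfl | rfl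
    · rw [(hbas j).1, (hbas k).1]; exact Qd_pow hED hLL j k
    · rw [(hbas j).1, (hbas k).2]; exact Qd_pow hED hLH j k
    · rw [(hbas j).2, (hbas k).1]; exact Qd_pow hED hHL j k
    · rw [(hbas j).2, (hbas k).2]; exact Qd_pow hED hHH j k
  have main : (S.prod n).compr₂ E = (S.prod n).compl₂ E + (S.prod n) ∘ₗ E := by
    apply bas.ext; intro p; apply bas.ext; intro q
    simpa using key p q n
  have := LinearMap.congr_fun (LinearMap.congr_fun main a) b
  simpa using this

theorem prod0_eq (S : LCA F A) (L H : A) (bas : Module.Basis (Fin 2 × ℕ) F A)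
    (hbas : ∀ k : ℕ, bas (0, k) = (S.D ^ k) L ∧ bas (1, k) = (S.D ^ k) H)
    (b : A) (hHb : S.prod 0 H b = 0) (x : A) :
    S.prod 0 x b = (bas.repr x (0, 0)) • S.prod 0 L b := by
  have main : (S.prod 0).flip b = (bas.coord (0, 0)).smulRight (S.prod 0 L b) := by
    apply bas.ext
    have h2 : ∀ z : Fin 2, z = 0 ∨ z = 1 := by decide
    rintro ⟨y, k⟩
    rcases h2 y with rfl | rfl <;> rcases k with _ | k <;>
      simp only [LinearMap.flip_apply, LinearMap.smulRight_apply, Module.Basis.coord_apply,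
        Module.Basis.repr_self, Finsupp.single_apply, Prod.mk.injEq]
    · rw [(hbas 0).1]; simp
    · have e : (S.D ^ (k+1)) L = S.D ((S.D ^ k) L) := by rw [pow_succ']; rfl
      rw [(hbas (k+1)).1, e]
      simp [S.sesq₀]
    · rw [(hbas 0).2]
      simp [hHb]
    · have e : (S.D ^ (k+1)) H = S.D ((S.D ^ k) H) := by rw [pow_succ']; rfl
      rw [(hbas (k+1)).2, e]
      simp [S.sesq₀]
  have := LinearMap.congr_fun main x
  simpa [Module.Basis.coord_apply] using this

end Waux

/-- **Non-inner derivations of the Heisenberg–Virasoro conformal algebra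
`𝒲(0)`.**  The `F[∂]`-module maps `f₁₁ : L ↦ H, H ↦ 0`, `f₁₂ : H ↦ H, L ↦ 0`
and `f₁₃ : L ↦ ∂H, H ↦ 0` are derivations of `𝒲(0)` which are not inner, and
no nontrivial linear combination of them is inner; hence
`dim Der(𝒲(0))/Inder(𝒲(0)) ≥ 3`. -/
theorem W0_noninner_derivations
    (F : Type) [Field F] [CharZero F]
    (A : Type) [AddCommGroup A] [Module F A]
    (S : LCA F A) (L H : A)
    -- {L, H} is an F[∂]-basis of 𝒲(0)
    (bas : Module.Basis (Fin 2 × ℕ) F A)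
    (hbas : ∀ k : ℕ, bas (0, k) = (S.D ^ k) L ∧ bas (1, k) = (S.D ^ k) H)
    -- λ-brackets of 𝒲(0)
    (hLL0 : S.prod 0 L L = S.D L) (hLL1 : S.prod 1 L L = (2 : F) • L)
    (hLLn : ∀ n : ℕ, 2 ≤ n → S.prod n L L = 0)
    (hLH0 : S.prod 0 L H = S.D H) (hLH1 : S.prod 1 L H = H)
    (hLHn : ∀ n : ℕ, 2 ≤ n → S.prod n L H = 0)
    (hHL0 : S.prod 0 H L = 0) (hHL1 : S.prod 1 H L = H)
    (hHLn : ∀ n : ℕ, 2 ≤ n → S.prod n H L = 0)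
    (hHH : ∀ n : ℕ, S.prod n H H = 0) :
    ∀ (f11 f12 f13 : A →ₗ[F] A),
      f11 = bas.constr F (fun p => if p.1 = 0 then (S.D ^ p.2) H else 0) →
      f12 = bas.constr F (fun p => if p.1 = 0 then 0 else (S.D ^ p.2) H) →
      f13 = bas.constr F (fun p => if p.1 = 0 then (S.D ^ (p.2 + 1)) H else 0) →
      (IsConfDerivation S f11 ∧ ¬ IsInnerDerivation S f11) ∧
      (IsConfDerivation S f12 ∧ ¬ IsInnerDerivation S f12) ∧
      (IsConfDerivation S f13 ∧ ¬ IsInnerDerivation S f13) ∧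
      (∀ c1 c2 c3 : F,
        IsInnerDerivation S (c1 • f11 + c2 • f12 + c3 • f13) →
          c1 = 0 ∧ c2 = 0 ∧ c3 = 0) := by
  intro f11 f12 f13 h11 h12 h13
  have h2 : ∀ z : Fin 2, z = 0 ∨ z = 1 := by decide
  have Dstep : ∀ (x : A) (k : ℕ), (S.D ^ (k+1)) x = S.D ((S.D ^ k) x) := by
    intro x k; rw [pow_succ']; rfl
  have hL : L = bas (0, 0) := by rw [(hbas 0).1]; simp
  have hH : H = bas (1, 0) := by rw [(hbas 0).2]; simp
  have hDL : S.D L = bas (0, 1) := by rw [(hbas 1).1]; simp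
  have hDH : S.D H = bas (1, 1) := by rw [(hbas 1).2]; simp
  -- values of the maps on the basis
  have f11b0 : ∀ k, f11 (bas (0, k)) = (S.D ^ k) H := by
    intro k; rw [h11, Module.Basis.constr_basis]; simp
  have f11b1 : ∀ k, f11 (bas (1, k)) = 0 := by
    intro k; rw [h11, Module.Basis.constr_basis]; simp
  have f12b0 : ∀ k, f12 (bas (0, k)) = 0 := by
    intro k; rw [h12, Module.Basis.constr_basis]; simp
  have f12b1 : ∀ k, f12 (bas (1, k)) = (S.D ^ k) H := by
    intro k; rw [h12, Module.Basis.constr_basis]; simp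
  have f13b0 : ∀ k, f13 (bas (0, k)) = (S.D ^ (k+1)) H := by
    intro k; rw [h13, Module.Basis.constr_basis]; simp
  have f13b1 : ∀ k, f13 (bas (1, k)) = 0 := by
    intro k; rw [h13, Module.Basis.constr_basis]; simp
  have f11L : f11 L = H := by rw [hL, f11b0]; simp
  have f11H : f11 H = 0 := by rw [hH, f11b1]
  have f12L : f12 L = 0 := by rw [hL, f12b0]
  have f12H : f12 H = H := by rw [hH, f12b1]; simpa using hH
  have f13L : f13 L = S.D H := by rw [hL, f13b0]; simp
  have f13H : f13 H = 0 := by rw [hH, f13b1]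
  -- commutation with D
  have basD0 : ∀ k, S.D (bas (0, k)) = bas (0, k+1) := by
    intro k; rw [(hbas k).1, (hbas (k+1)).1, Dstep]
  have basD1 : ∀ k, S.D (bas (1, k)) = bas (1, k+1) := by
    intro k; rw [(hbas k).2, (hbas (k+1)).2, Dstep]
  have hED11 : ∀ x, f11 (S.D x) = S.D (f11 x) := by
    have main : f11 ∘ₗ S.D = S.D ∘ₗ f11 := by
      apply bas.ext
      rintro ⟨y, k⟩
      rcases h2 y with rfl | rfl <;> simp only [LinearMap.comp_apply]
      · rw [basD0, f11b0, f11b0, Dstep]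
      · rw [basD1, f11b1, f11b1, map_zero]
    exact fun x => LinearMap.congr_fun main x
  have hED12 : ∀ x, f12 (S.D x) = S.D (f12 x) := by
    have main : f12 ∘ₗ S.D = S.D ∘ₗ f12 := by
      apply bas.ext
      rintro ⟨y, k⟩
      rcases h2 y with rfl | rfl <;> simp only [LinearMap.comp_apply]
      · rw [basD0, f12b0, f12b0, map_zero]
      · rw [basD1, f12b1, f12b1, Dstep]
    exact fun x => LinearMap.congr_fun main x
  have hED13 : ∀ x, f13 (S.D x) = S.D (f13 x) := by
    have main : f13 ∘ₗ S.D = S.D ∘ₗ f13 := by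
      apply bas.ext
      rintro ⟨y, k⟩
      rcases h2 y with rfl | rfl <;> simp only [LinearMap.comp_apply]
      · rw [basD0, f13b0, f13b0, Dstep]
      · rw [basD1, f13b1, f13b1, map_zero]
    exact fun x => LinearMap.congr_fun main x
  -- f11 is a derivation
  have d11 : IsConfDerivation S f11 := by
    refine isDeriv_of_LH S L H bas hbas f11 hED11 ?_ ?_ ?_ ?_
    · intro n
      rcases n with _ | _ | n
      · rw [hLL0, hED11, f11L, hLH0, hHL0, add_zero]
      · rw [hLL1, map_smul, f11L, hLH1, hHL1, two_smul]
      · rw [hLLn _ (by omega), map_zero, f11L, hLHn _ (by omega),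
          hHLn _ (by omega), add_zero]
    · intro n
      rw [f11H, f11L, map_zero, hHH n, add_zero]
      rcases n with _ | _ | n
      · rw [hLH0, hED11, f11H, map_zero]
      · rw [hLH1, f11H]
      · rw [hLHn _ (by omega), map_zero]
    · intro n
      rw [f11L, f11H, hHH n]
      rcases n with _ | _ | n
      · rw [hHL0, map_zero]; simp
      · rw [hHL1, f11H]; simp
      · rw [hHLn _ (by omega), map_zero]; simp
    · intro n
      rw [hHH n, f11H]; simp
  -- f12 is a derivation
  have d12 : IsConfDerivation S f12 := by
    refine isDeriv_of_LH S L H bas hbas f12 hED12 ?_ ?_ ?_ ?_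
    · intro n
      rw [f12L]
      simp only [map_zero, LinearMap.zero_apply, add_zero]
      rcases n with _ | _ | n
      · rw [hLL0, hED12, f12L, map_zero]
      · rw [hLL1, map_smul, f12L, smul_zero]
      · rw [hLLn _ (by omega), map_zero]
    · intro n
      rw [f12H, f12L]
      simp only [map_zero, LinearMap.zero_apply, add_zero]
      rcases n with _ | _ | n
      · rw [hLH0, hED12, f12H]
      · rw [hLH1, f12H]
      · rw [hLHn (n+2) (by omega), map_zero]
    · intro n
      rw [f12L, f12H]
      simp only [map_zero, LinearMap.zero_apply, zero_add]
      rcases n with _ | _ | n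
      · rw [hHL0, map_zero]
      · rw [hHL1, f12H]
      · rw [hHLn (n+2) (by omega), map_zero]
    · intro n
      rw [f12H, hHH n]; simp
  -- f13 is a derivation
  have d13 : IsConfDerivation S f13 := by
    refine isDeriv_of_LH S L H bas hbas f13 hED13 ?_ ?_ ?_ ?_
    · intro n
      rw [f13L]
      rcases n with _ | _ | _ | n
      · rw [hLL0, hED13, f13L, S.sesq₂₀, S.sesq₀, hLH0, add_zero]
      · rw [hLL1, map_smul, f13L, S.sesq₂ 0, S.sesq₁ 0, hLH1, hLH0, hHL0]
        module
      · rw [hLLn 2 (by omega), map_zero, S.sesq₂ 1, S.sesq₁ 1,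
          hLHn 2 (by omega), hLH1, hHL1, map_zero]
        module
      · rw [hLLn _ (by omega), map_zero, S.sesq₂ (n+2), S.sesq₁ (n+2),
          hLHn _ (by omega), hLHn _ (by omega), hHLn _ (by omega), map_zero]
        simp
    · intro n
      rw [f13H, f13L, map_zero, zero_add]
      rcases n with _ | n
      · rw [S.sesq₀, hLH0, hED13, f13H, map_zero]
      · rw [S.sesq₁ n, hHH n, smul_zero]
        rcases n with _ | _ | n
        · rw [hLH1, f13H]
        · rw [hLHn _ (by omega), map_zero]
        · rw [hLHn _ (by omega), map_zero]
    · intro n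
      rw [f13L, f13H]
      rcases n with _ | n
      · rw [hHL0, map_zero, S.sesq₂₀, hHH 0, map_zero]; simp
      · rw [S.sesq₂ n, hHH (n+1), hHH n, map_zero]
        rcases n with _ | _ | n
        · rw [hHL1, f13H]; simp
        · rw [hHLn _ (by omega), map_zero]; simp
        · rw [hHLn _ (by omega), map_zero]; simp
    · intro n
      rw [hHH n, f13H]; simp [hHH]
  -- independence modulo inner derivations
  have indep : ∀ c1 c2 c3 : F,
      IsInnerDerivation S (c1 • f11 + c2 • f12 + c3 • f13) →
        c1 = 0 ∧ c2 = 0 ∧ c3 = 0 := by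
    rintro c1 c2 c3 ⟨x, hx⟩
    have eL := hx L
    have eH := hx H
    rw [prod0_eq S L H bas hbas L hHL0 x] at eL
    rw [prod0_eq S L H bas hbas H (hHH 0) x] at eH
    simp only [LinearMap.add_apply, LinearMap.smul_apply, f11L, f12L, f13L,
      f11H, f12H, f13H, hLL0, hLH0, smul_zero, add_zero, zero_add] at eL eH
    set r := bas.repr x (0, 0) with hr
    -- eL : c1 • H + c3 • S.D H = r • S.D L
    rw [hDH, hDL, hH] at eL
    have coord : ∀ p : Fin 2 × ℕ,
        (Finsupp.single ((1 : Fin 2), (0 : ℕ)) c1) p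
          + (Finsupp.single ((1 : Fin 2), (1 : ℕ)) c3) p
          = (Finsupp.single ((0 : Fin 2), (1 : ℕ)) r) p := by
      intro p
      have := congrArg (fun z => bas.repr z p) eL
      simpa [Module.Basis.repr_self, Finsupp.smul_single, Prod.ext_iff] using this
    have hc1 : c1 = 0 := by
      simpa [Finsupp.single_apply, Prod.ext_iff] using coord (1, 0)
    have hc3 : c3 = 0 := by
      simpa [Finsupp.single_apply, Prod.ext_iff] using coord (1, 1)
    have hrz : r = 0 := by
      simpa [Finsupp.single_apply, Prod.ext_iff] using (coord (0, 1)).symm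
    have hc2 : c2 = 0 := by
      rw [hrz, zero_smul] at eH
      rcases smul_eq_zero.mp eH with h | h
      · exact h
      · exact absurd (hH ▸ h) (by simpa [hH] using bas.ne_zero (1, 0))
    exact ⟨hc1, hc2, hc3⟩
  have ni : ∀ g : A →ₗ[F] A, ∀ c1 c2 c3 : F,
      g = c1 • f11 + c2 • f12 + c3 • f13 → ¬(c1 = 0 ∧ c2 = 0 ∧ c3 = 0) →
        ¬ IsInnerDerivation S g := by
    rintro g c1 c2 c3 rfl hne hinner
    exact hne (indep c1 c2 c3 hinner)
  refine ⟨⟨d11, ni f11 1 0 0 (by simp) (by simp)⟩,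
    ⟨d12, ni f12 0 1 0 (by simp) (by simp)⟩,
    ⟨d13, ni f13 0 0 1 (by simp) (by simp)⟩, indep⟩
end

section
/- In the Heisenberg–Virasoro conformal algebra 𝒲(0), the space of Casimir elements Cas(𝒲(0), 𝒲(0)) = {∫a ∈ 𝒲(0)/∂𝒲(0) : [a_λ 𝒲(0)]|_{λ=0} = 0} is one-dimensional, spanned by ∫H (the image of H in 𝒲(0)/∂𝒲(0)). -/
open Function Finset

/-- **Casimir elements of the Heisenberg–Virasoro conformal algebra `𝒲(0)`.**
The space `Cas(𝒲(0),𝒲(0)) = {∫a : [a_λ 𝒲(0)]|_{λ=0} = 0}` is one-dimensional,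
spanned by `∫H`: the element `H` is Casimir, its class mod `∂𝒲(0)` is nonzero,
and every Casimir element is of the form `c·H + ∂y`. -/
theorem W0_casimir_elements
    (F : Type) [Field F] [CharZero F]
    (A : Type) [AddCommGroup A] [Module F A]
    (S : LCA F A) (L H : A)
    -- {L, H} is an F[∂]-basis of 𝒲(0)
    (bas : Module.Basis (Fin 2 × ℕ) F A)
    (hbas : ∀ k : ℕ, bas (0, k) = (S.D ^ k) L ∧ bas (1, k) = (S.D ^ k) H)
    -- λ-brackets of 𝒲(0)
    (hLL0 : S.prod 0 L L = S.D L) (hLL1 : S.prod 1 L L = (2 : F) • L)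
    (hLLn : ∀ n : ℕ, 2 ≤ n → S.prod n L L = 0)
    (hLH0 : S.prod 0 L H = S.D H) (hLH1 : S.prod 1 L H = H)
    (hLHn : ∀ n : ℕ, 2 ≤ n → S.prod n L H = 0)
    (hHL0 : S.prod 0 H L = 0) (hHL1 : S.prod 1 H L = H)
    (hHLn : ∀ n : ℕ, 2 ≤ n → S.prod n H L = 0)
    (hHH : ∀ n : ℕ, S.prod n H H = 0) :
    (∀ x : A, S.prod 0 H x = 0) ∧
    (¬ ∃ y : A, H = S.D y) ∧
    (∀ a : A, (∀ x : A, S.prod 0 a x = 0) →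
      ∃ (c : F) (y : A), a = c • H + S.D y) := by
  have hL0 : bas (0, 0) = L := by simpa using (hbas 0).1
  have hH0 : bas (1, 0) = H := by simpa using (hbas 0).2
  have hDb : ∀ (i : Fin 2) (k : ℕ), S.D (bas (i, k)) = bas (i, k + 1) := by
    intro i k
    fin_cases i
    · show S.D (bas (0, k)) = bas (0, k + 1)
      rw [(hbas k).1, (hbas (k + 1)).1, pow_succ']; rfl
    · show S.D (bas (1, k)) = bas (1, k + 1)
      rw [(hbas k).2, (hbas (k + 1)).2, pow_succ']; rfl
  -- coordinate helpers
  have hc00 : ∀ i k, bas.coord (0, 0) (bas (i, k + 1)) = 0 := by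
    intro i k
    simp [Module.Basis.coord_apply, Module.Basis.repr_self, Finsupp.single_apply, Prod.ext_iff]
  have hc10 : ∀ i k, bas.coord (1, 0) (bas (i, k + 1)) = 0 := by
    intro i k
    simp [Module.Basis.coord_apply, Module.Basis.repr_self, Finsupp.single_apply, Prod.ext_iff]
  have hc00L : bas.coord (0, 0) (bas (0, 0)) = 1 := by
    simp [Module.Basis.coord_apply, Module.Basis.repr_self]
  have hc00H : bas.coord (0, 0) (bas (1, 0)) = 0 := by
    simp [Module.Basis.coord_apply, Module.Basis.repr_self, Finsupp.single_apply, Prod.ext_iff]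
  have hc10L : bas.coord (1, 0) (bas (0, 0)) = 0 := by
    simp [Module.Basis.coord_apply, Module.Basis.repr_self, Finsupp.single_apply, Prod.ext_iff]
  have hc10H : bas.coord (1, 0) (bas (1, 0)) = 1 := by
    simp [Module.Basis.coord_apply, Module.Basis.repr_self]
  -- part 1
  have key1 : ∀ (i : Fin 2) (k : ℕ), S.prod 0 H (bas (i, k)) = 0 := by
    intro i k
    induction k with
    | zero =>
      fin_cases i
      · show S.prod 0 H (bas (0, 0)) = 0
        rw [hL0]; exact hHL0
      · show S.prod 0 H (bas (1, 0)) = 0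
        rw [hH0]; exact hHH 0
    | succ k ih =>
      rw [← hDb i k, S.sesq₂₀, ih, map_zero]
  have h1 : ∀ x : A, S.prod 0 H x = 0 := by
    intro x
    have : S.prod 0 H = 0 := bas.ext fun p => by
      rcases p with ⟨i, k⟩; simpa using key1 i k
    rw [this]; rfl
  -- part 2
  have h2 : ¬ ∃ y : A, H = S.D y := by
    rintro ⟨y, hy⟩
    have hf : (bas.coord (1, 0)) ∘ₗ S.D = 0 := bas.ext fun p => by
      rcases p with ⟨i, k⟩
      simpa [hDb i k] using hc10 i k
    have hfH : bas.coord (1, 0) H = 1 := by rw [← hH0]; exact hc10H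
    have hz : bas.coord (1, 0) H = 0 := by
      rw [hy]; exact LinearMap.congr_fun hf y
    rw [hfH] at hz
    exact one_ne_zero hz
  refine ⟨h1, h2, ?_⟩
  intro a ha
  let T : A →ₗ[F] A := bas.constr F (fun p => if p.2 = 0 then 0 else bas (p.1, p.2 - 1))
  have hT0 : ∀ i : Fin 2, T (bas (i, 0)) = 0 := by
    intro i; simp [T, Module.Basis.constr_basis]
  have hTs : ∀ (i : Fin 2) (k : ℕ), T (bas (i, k + 1)) = bas (i, k) := by
    intro i k; simp [T, Module.Basis.constr_basis]
  have hdecomp : (LinearMap.id : A →ₗ[F] A)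
      = (bas.coord (0, 0)).smulRight L + (bas.coord (1, 0)).smulRight H + S.D ∘ₗ T := by
    apply bas.ext
    rintro ⟨i, k⟩
    simp only [LinearMap.id_apply, LinearMap.add_apply, LinearMap.smulRight_apply,
      LinearMap.comp_apply]
    cases k with
    | zero =>
      fin_cases i
      · show bas (0, 0) = bas.coord (0,0) (bas (0,0)) • L + bas.coord (1,0) (bas (0,0)) • H
          + S.D (T (bas (0, 0)))
        rw [hc00L, hc10L, hT0, map_zero, hL0]
        simp
      · show bas (1, 0) = bas.coord (0,0) (bas (1,0)) • L + bas.coord (1,0) (bas (1,0)) • H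
          + S.D (T (bas (1, 0)))
        rw [hc00H, hc10H, hT0, map_zero, hH0]
        simp
    | succ k =>
      rw [hc00 i k, hc10 i k, hTs i k, hDb i k]
      simp
  have hprodL : (S.prod 0).flip L = (bas.coord (0, 0)).smulRight (S.D L) := by
    apply bas.ext
    rintro ⟨i, k⟩
    simp only [LinearMap.flip_apply, LinearMap.smulRight_apply]
    cases k with
    | zero =>
      fin_cases i
      · show S.prod 0 (bas (0, 0)) L = bas.coord (0,0) (bas (0,0)) • S.D L
        rw [hc00L, hL0, hLL0, one_smul]
      · show S.prod 0 (bas (1, 0)) L = bas.coord (0,0) (bas (1,0)) • S.D L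
        rw [hc00H, hH0, hHL0, zero_smul]
    | succ k =>
      rw [hc00 i k, ← hDb i k, zero_smul]
      exact S.sesq₀ _ _
  have hga : bas.coord (0, 0) a = 0 := by
    have h0 : S.prod 0 a L = 0 := ha L
    have heq := LinearMap.congr_fun hprodL a
    simp only [LinearMap.flip_apply, LinearMap.smulRight_apply] at heq
    rw [h0] at heq
    have hDL : S.D L ≠ 0 := by
      rw [← hL0, hDb]
      exact bas.ne_zero _
    rcases smul_eq_zero.mp heq.symm with h | h
    · exact h
    · exact absurd h hDL
  refine ⟨bas.coord (1, 0) a, T a, ?_⟩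
  have heq := LinearMap.congr_fun hdecomp a
  simp only [LinearMap.id_apply, LinearMap.add_apply, LinearMap.smulRight_apply,
    LinearMap.comp_apply] at heq
  rw [hga, zero_smul, zero_add] at heq
  exact heq
end

section
/- In the Schrödinger–Virasoro conformal algebra 𝒮𝒱, every Casimir element is a scalar multiple of ∫M, and the 𝔽[∂]-module map f₁₁: L ↦ M, M ↦ 0, Y ↦ 0 is a derivation of 𝒮𝒱 that is not inner. -/
open Function Finset

/-- **Casimirs and a non-inner derivation of the Schrödinger–Virasoro conformal
algebra `𝒮𝒱`.**  In `𝒮𝒱 = F[∂]L ⊕ F[∂]M ⊕ F[∂]Y`, every Casimir element is a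
scalar multiple of `∫M` (i.e. `M` is Casimir and every Casimir is `c·M + ∂y`),
and the `F[∂]`-module map `f₁₁ : L ↦ M, M ↦ 0, Y ↦ 0` is a derivation of `𝒮𝒱`
which is not inner. -/
theorem SV_casimir_and_noninner_derivation
    (F : Type) [Field F] [CharZero F]
    (A : Type) [AddCommGroup A] [Module F A]
    (S : LCA F A) (L Mel Y : A)
    -- {L, M, Y} is an F[∂]-basis of 𝒮𝒱
    (bas : Module.Basis (Fin 3 × ℕ) F A)
    (hbas : ∀ k : ℕ, bas (0, k) = (S.D ^ k) L ∧ bas (1, k) = (S.D ^ k) Mel ∧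
      bas (2, k) = (S.D ^ k) Y)
    -- nonzero λ-brackets of 𝒮𝒱
    (hLL0 : S.prod 0 L L = S.D L) (hLL1 : S.prod 1 L L = (2 : F) • L)
    (hLLn : ∀ n : ℕ, 2 ≤ n → S.prod n L L = 0)
    (hLM0 : S.prod 0 L Mel = S.D Mel) (hLM1 : S.prod 1 L Mel = Mel)
    (hLMn : ∀ n : ℕ, 2 ≤ n → S.prod n L Mel = 0)
    (hLY0 : S.prod 0 L Y = S.D Y) (hLY1 : S.prod 1 L Y = ((3 : F)/2) • Y)
    (hLYn : ∀ n : ℕ, 2 ≤ n → S.prod n L Y = 0)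
    (hML0 : S.prod 0 Mel L = 0) (hML1 : S.prod 1 Mel L = Mel)
    (hMLn : ∀ n : ℕ, 2 ≤ n → S.prod n Mel L = 0)
    (hYL0 : S.prod 0 Y L = ((1 : F)/2) • S.D Y) (hYL1 : S.prod 1 Y L = ((3 : F)/2) • Y)
    (hYLn : ∀ n : ℕ, 2 ≤ n → S.prod n Y L = 0)
    (hYY0 : S.prod 0 Y Y = S.D Mel) (hYY1 : S.prod 1 Y Y = (2 : F) • Mel)
    (hYYn : ∀ n : ℕ, 2 ≤ n → S.prod n Y Y = 0)
    -- all other brackets of basis elements vanish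
    (hMM : ∀ n : ℕ, S.prod n Mel Mel = 0)
    (hMY : ∀ n : ℕ, S.prod n Mel Y = 0)
    (hYM : ∀ n : ℕ, S.prod n Y Mel = 0) :
    (∀ x : A, S.prod 0 Mel x = 0) ∧
    (∀ a : A, (∀ x : A, S.prod 0 a x = 0) →
      ∃ (c : F) (y : A), a = c • Mel + S.D y) ∧
    (∀ f11 : A →ₗ[F] A,
      f11 = bas.constr F (fun p => if p.1 = 0 then (S.D ^ p.2) Mel else 0) →
      IsConfDerivation S f11 ∧ ¬ IsInnerDerivation S f11) := by
  -- `∂^(k+1) x = ∂ (∂^k x)`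
  have hDpow : ∀ (k : ℕ) (x : A), (S.D ^ (k+1)) x = S.D ((S.D ^ k) x) := by
    intro k x
    rw [pow_succ']
    rfl
  -- generators
  have hent : ∀ (i : Fin 3) (k : ℕ), bas (i, k) = (S.D ^ k) (![L, Mel, Y] i) := by
    intro i k
    fin_cases i
    · exact (hbas k).1
    · exact (hbas k).2.1
    · exact (hbas k).2.2
  -- Part A : M is a Casimir element
  have hgenM : ∀ (k : ℕ) (e : A), S.prod 0 Mel e = 0 → S.prod 0 Mel ((S.D ^ k) e) = 0 := by
    intro k
    induction k with
    | zero => intro e h; simpa using h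
    | succ k ih => intro e h; rw [hDpow, S.sesq₂₀, ih e h, map_zero]
  have hMbase : ∀ i : Fin 3, S.prod 0 Mel (![L, Mel, Y] i) = 0 := by
    intro i
    fin_cases i
    · exact hML0
    · exact hMM 0
    · exact hMY 0
  have partA : ∀ x : A, S.prod 0 Mel x = 0 := by
    have h : S.prod 0 Mel = 0 := by
      apply bas.ext
      rintro ⟨i, k⟩
      rw [LinearMap.zero_apply, hent i k]
      exact hgenM k _ (hMbase i)
    intro x; rw [h]; rfl
  -- identification of basic basis vectors
  have hL0 : L = bas (0, 0) := by rw [(hbas 0).1, pow_zero]; rfl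
  have hM0 : Mel = bas (1, 0) := by rw [(hbas 0).2.1, pow_zero]; rfl
  have hY0 : Y = bas (2, 0) := by rw [(hbas 0).2.2, pow_zero]; rfl
  have hL1 : S.D L = bas (0, 1) := by rw [(hbas 1).1, pow_one]
  have hY1 : S.D Y = bas (2, 1) := by rw [(hbas 1).2.2, pow_one]
  -- the key computation of `a_(0) L`
  have hvL : ∀ x : A, S.prod 0 x L =
      (bas.repr x (0,0)) • bas (0,1) + (bas.repr x (2,0)) • (((1:F)/2) • bas (2,1)) := by
    have h : (S.prod 0).flip L =
        (bas.coord (0,0)).smulRight (bas (0,1))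
          + (bas.coord (2,0)).smulRight (((1:F)/2) • bas (2,1)) := by
      apply bas.ext
      rintro ⟨i, k⟩
      rw [LinearMap.add_apply, LinearMap.smulRight_apply, LinearMap.smulRight_apply,
        LinearMap.flip_apply, Module.Basis.coord_apply, Module.Basis.coord_apply, Module.Basis.repr_self]
      cases k with
      | zero =>
        fin_cases i
        · show S.prod 0 (bas (0,0)) L = _
          rw [← hL0, hLL0, hL1]
          simp [Finsupp.single_apply, Prod.ext_iff, Fin.ext_iff]
        · show S.prod 0 (bas (1,0)) L = _
          rw [← hM0, hML0]
          simp [Finsupp.single_apply, Prod.ext_iff, Fin.ext_iff]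
        · show S.prod 0 (bas (2,0)) L = _
          rw [← hY0, hYL0, hY1]
          simp [Finsupp.single_apply, Prod.ext_iff, Fin.ext_iff]
      | succ k =>
        have hne0 : ((i, k+1) : Fin 3 × ℕ) ≠ (0, 0) := by simp
        have hne2 : ((i, k+1) : Fin 3 × ℕ) ≠ (2, 0) := by simp
        rw [Finsupp.single_eq_of_ne hne0.symm, Finsupp.single_eq_of_ne hne2.symm,
          hent i (k+1), hDpow, S.sesq₀]
        simp
    intro x
    simpa using LinearMap.congr_fun h x
  refine ⟨partA, ?_, ?_⟩
  · -- Part B : every Casimir element is c•M + ∂y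
    intro a ha
    have h0 : (bas.repr a (0,0)) • bas (0,1) + (bas.repr a (2,0)) • (((1:F)/2) • bas (2,1)) = 0 := by
      rw [← hvL a]; exact ha L
    have hrepr := congrArg bas.repr h0
    rw [map_add, map_smul, map_smul, map_smul, Module.Basis.repr_self, Module.Basis.repr_self,
      map_zero] at hrepr
    have h00 : bas.repr a (0,0) = 0 := by
      have h := DFunLike.congr_fun hrepr ((0 : Fin 3), (1 : ℕ))
      rw [Finsupp.add_apply, Finsupp.smul_apply, Finsupp.smul_apply, Finsupp.smul_apply,
        Finsupp.single_eq_same, Finsupp.single_eq_of_ne (by decide)] at h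
      simpa using h
    have h20 : bas.repr a (2,0) = 0 := by
      have h := DFunLike.congr_fun hrepr ((2 : Fin 3), (1 : ℕ))
      rw [Finsupp.add_apply, Finsupp.smul_apply, Finsupp.smul_apply, Finsupp.smul_apply,
        Finsupp.single_eq_same, Finsupp.single_eq_of_ne (by decide)] at h
      simp at h
      simpa using h
    refine ⟨bas.repr a (1,0), ?_⟩
    have hrange : a - (bas.repr a (1,0)) • Mel ∈ LinearMap.range S.D := by
      have hsupp : ∀ p ∈ (bas.repr (a - (bas.repr a (1,0)) • Mel)).support,
          bas p ∈ LinearMap.range S.D := by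
        rintro ⟨i, k⟩ hp
        cases k with
        | zero =>
          exfalso
          have hne := Finsupp.mem_support_iff.mp hp
          apply hne
          fin_cases i
          · show (bas.repr (a - (bas.repr a (1,0)) • Mel)) ((0 : Fin 3), (0 : ℕ)) = 0
            rw [map_sub, map_smul, Finsupp.sub_apply, Finsupp.smul_apply, hM0,
              Module.Basis.repr_self, Finsupp.single_eq_of_ne (by decide), h00]
            simp
          · show (bas.repr (a - (bas.repr a (1,0)) • Mel)) ((1 : Fin 3), (0 : ℕ)) = 0
            rw [map_sub, map_smul, Finsupp.sub_apply, Finsupp.smul_apply, hM0,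
              Module.Basis.repr_self, Finsupp.single_eq_same]
            simp
          · show (bas.repr (a - (bas.repr a (1,0)) • Mel)) ((2 : Fin 3), (0 : ℕ)) = 0
            rw [map_sub, map_smul, Finsupp.sub_apply, Finsupp.smul_apply, hM0,
              Module.Basis.repr_self, Finsupp.single_eq_of_ne (by decide), h20]
            simp
        | succ k =>
          refine ⟨(S.D ^ k) (![L, Mel, Y] i), ?_⟩
          rw [← hDpow, ← hent i (k+1)]
      have hmem := Module.Basis.mem_span_repr_support bas (a - (bas.repr a (1,0)) • Mel)
      refine Submodule.span_le.mpr ?_ hmem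
      rintro _ ⟨p, hp, rfl⟩
      exact hsupp p hp
    obtain ⟨y, hy⟩ := hrange
    exact ⟨y, by rw [hy]; abel⟩
  · -- Part C : the derivation f₁₁
    intro f11 hf
    have hfb : ∀ (i : Fin 3) (k : ℕ),
        f11 (bas (i, k)) = if i = 0 then (S.D ^ k) Mel else 0 := by
      intro i k
      rw [hf, Module.Basis.constr_basis]
    have hfL : ∀ k, f11 ((S.D ^ k) L) = (S.D ^ k) Mel := by
      intro k; rw [← (hbas k).1, hfb]; simp
    have hfM : ∀ k, f11 ((S.D ^ k) Mel) = 0 := by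
      intro k; rw [← (hbas k).2.1, hfb, if_neg (by decide)]
    have hfY : ∀ k, f11 ((S.D ^ k) Y) = 0 := by
      intro k; rw [← (hbas k).2.2, hfb, if_neg (by decide)]
    have hfD : ∀ x, f11 (S.D x) = S.D (f11 x) := by
      have h : f11 ∘ₗ S.D = S.D ∘ₗ f11 := by
        apply bas.ext
        rintro ⟨i, k⟩
        rw [LinearMap.comp_apply, LinearMap.comp_apply, hent i k]
        fin_cases i
        · show f11 (S.D ((S.D ^ k) L)) = S.D (f11 ((S.D ^ k) L))
          rw [← hDpow, hfL, hfL, hDpow]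
        · show f11 (S.D ((S.D ^ k) Mel)) = S.D (f11 ((S.D ^ k) Mel))
          rw [← hDpow, hfM, hfM, map_zero]
        · show f11 (S.D ((S.D ^ k) Y)) = S.D (f11 ((S.D ^ k) Y))
          rw [← hDpow, hfY, hfY, map_zero]
      intro x
      exact LinearMap.congr_fun h x
    have f11L : f11 L = Mel := by simpa using hfL 0
    have f11M : f11 Mel = 0 := by simpa using hfM 0
    have f11Y : f11 Y = 0 := by simpa using hfY 0
    have f11DL : f11 (S.D L) = S.D Mel := by rw [hfD, f11L]
    have f11DM : f11 (S.D Mel) = 0 := by rw [hfD, f11M, map_zero]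
    have f11DY : f11 (S.D Y) = 0 := by rw [hfD, f11Y, map_zero]
    -- the derivation property on pairs, stable under D in each slot
    have stepD1 : ∀ a b : A,
        (∀ n, f11 (S.prod n a b) = S.prod n a (f11 b) + S.prod n (f11 a) b) →
        ∀ n, f11 (S.prod n (S.D a) b)
          = S.prod n (S.D a) (f11 b) + S.prod n (f11 (S.D a)) b := by
      intro a b h n
      cases n with
      | zero => simp [hfD, S.sesq₀]
      | succ n => simp only [hfD, S.sesq₁, map_smul, h n, smul_add]
    have stepD2 : ∀ a b : A,
        (∀ n, f11 (S.prod n a b) = S.prod n a (f11 b) + S.prod n (f11 a) b) →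
        ∀ n, f11 (S.prod n a (S.D b))
          = S.prod n a (f11 (S.D b)) + S.prod n (f11 a) (S.D b) := by
      intro a b h n
      cases n with
      | zero => simp only [hfD, S.sesq₂₀, h 0, map_add]
      | succ n =>
        simp only [hfD, S.sesq₂, map_add, map_smul, h n, h (n+1), smul_add]
        abel
    have stepDk1 : ∀ a b : A,
        (∀ n, f11 (S.prod n a b) = S.prod n a (f11 b) + S.prod n (f11 a) b) →
        ∀ j n, f11 (S.prod n ((S.D ^ j) a) b)
          = S.prod n ((S.D ^ j) a) (f11 b) + S.prod n (f11 ((S.D ^ j) a)) b := by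
      intro a b h j
      induction j with
      | zero => simpa using h
      | succ j ih =>
        intro n
        have hh := stepD1 ((S.D ^ j) a) b ih n
        rw [← hDpow] at hh
        exact hh
    have stepDk2 : ∀ a b : A,
        (∀ n, f11 (S.prod n a b) = S.prod n a (f11 b) + S.prod n (f11 a) b) →
        ∀ k n, f11 (S.prod n a ((S.D ^ k) b))
          = S.prod n a (f11 ((S.D ^ k) b)) + S.prod n (f11 a) ((S.D ^ k) b) := by
      intro a b h k
      induction k with
      | zero => simpa using h
      | succ k ih =>
        intro n
        have hh := stepD2 a ((S.D ^ k) b) ih n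
        rw [← hDpow] at hh
        exact hh
    -- the nine base cases
    have hPLL : ∀ n, f11 (S.prod n L L) = S.prod n L (f11 L) + S.prod n (f11 L) L := by
      rintro (_|_|n)
      · rw [hLL0, f11DL, f11L, hLM0, hML0, add_zero]
      · rw [hLL1, map_smul, f11L, hLM1, hML1, two_smul]
      · rw [hLLn _ (by omega), map_zero, f11L, hLMn _ (by omega), hMLn _ (by omega), add_zero]
    have hPLM : ∀ n, f11 (S.prod n L Mel) = S.prod n L (f11 Mel) + S.prod n (f11 L) Mel := by
      rintro (_|_|n) <;>
        simp [hLM0, hLM1, hLMn _ (by omega : 2 ≤ _ + 2), f11DM, f11M, f11L, hMM]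
    have hPLY : ∀ n, f11 (S.prod n L Y) = S.prod n L (f11 Y) + S.prod n (f11 L) Y := by
      rintro (_|_|n) <;>
        simp [hLY0, hLY1, hLYn _ (by omega : 2 ≤ _ + 2), f11DY, f11Y, f11L, hMY]
    have hPML : ∀ n, f11 (S.prod n Mel L) = S.prod n Mel (f11 L) + S.prod n (f11 Mel) L := by
      rintro (_|_|n) <;>
        simp [hML0, hML1, hMLn _ (by omega : 2 ≤ _ + 2), f11M, f11L, hMM]
    have hPMM : ∀ n, f11 (S.prod n Mel Mel) = S.prod n Mel (f11 Mel) + S.prod n (f11 Mel) Mel := by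
      intro n; simp [hMM, f11M]
    have hPMY : ∀ n, f11 (S.prod n Mel Y) = S.prod n Mel (f11 Y) + S.prod n (f11 Mel) Y := by
      intro n; simp [hMY, f11M, f11Y]
    have hPYL : ∀ n, f11 (S.prod n Y L) = S.prod n Y (f11 L) + S.prod n (f11 Y) L := by
      rintro (_|_|n) <;>
        simp [hYL0, hYL1, hYLn _ (by omega : 2 ≤ _ + 2), f11Y, f11L, f11DY, hYM]
    have hPYM : ∀ n, f11 (S.prod n Y Mel) = S.prod n Y (f11 Mel) + S.prod n (f11 Y) Mel := by
      intro n; simp [hYM, f11M, f11Y]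
    have hPYY : ∀ n, f11 (S.prod n Y Y) = S.prod n Y (f11 Y) + S.prod n (f11 Y) Y := by
      rintro (_|_|n) <;>
        simp [hYY0, hYY1, hYYn _ (by omega : 2 ≤ _ + 2), f11Y, f11DM, f11M]
    have hPgen : ∀ (i i' : Fin 3) (n : ℕ),
        f11 (S.prod n (![L, Mel, Y] i) (![L, Mel, Y] i'))
          = S.prod n (![L, Mel, Y] i) (f11 (![L, Mel, Y] i'))
            + S.prod n (f11 (![L, Mel, Y] i)) (![L, Mel, Y] i') := by
      intro i i' n
      fin_cases i <;> fin_cases i'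
      · exact hPLL n
      · exact hPLM n
      · exact hPLY n
      · exact hPML n
      · exact hPMM n
      · exact hPMY n
      · exact hPYL n
      · exact hPYM n
      · exact hPYY n
    have key : ∀ (n : ℕ) (a b : A),
        f11 (S.prod n a b) = S.prod n a (f11 b) + S.prod n (f11 a) b := by
      intro n
      have h : (S.prod n).compr₂ f11 = (S.prod n).compl₂ f11 + (S.prod n).comp f11 := by
        apply bas.ext
        rintro ⟨i, j⟩
        apply bas.ext
        rintro ⟨i', k⟩
        simp only [LinearMap.compr₂_apply, LinearMap.compl₂_apply, LinearMap.add_apply,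
          LinearMap.comp_apply]
        rw [hent i j, hent i' k]
        exact stepDk2 _ _ (fun n => stepDk1 _ _ (fun n => hPgen i i' n) j n) k n
      intro a b
      simpa using LinearMap.congr_fun (LinearMap.congr_fun h a) b
    constructor
    · exact ⟨hfD, key⟩
    · rintro ⟨x, hx⟩
      have h1 : Mel = (bas.repr x (0,0)) • bas (0,1)
          + (bas.repr x (2,0)) • (((1:F)/2) • bas (2,1)) := by
        rw [← hvL x, ← hx L, f11L]
      have h2 := congrArg bas.repr h1
      rw [hM0, map_add, map_smul, map_smul, map_smul, Module.Basis.repr_self, Module.Basis.repr_self,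
        Module.Basis.repr_self] at h2
      have h3 := DFunLike.congr_fun h2 ((1 : Fin 3), (0 : ℕ))
      rw [Finsupp.single_eq_same, Finsupp.add_apply, Finsupp.smul_apply, Finsupp.smul_apply,
        Finsupp.smul_apply, Finsupp.single_eq_of_ne (by decide),
        Finsupp.single_eq_of_ne (by decide)] at h3
      simp at h3
end
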